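/- Fix p, q ∈ (0,1). Then the function F(α) = α·( 1/(1−p^α) + 1/(1−q^α) − 1 ) is strictly increasing on (0,∞). -/

import Mathlib

open Real

lemma h_strictMono : StrictMonoOn (fun x : ℝ => x / (1 - exp (-x)) - x / 2) (Set.Ioi 0) := by
  have hd : ∀ x : ℝ, 0 < x → 0 < 1 - exp (-x) := by
    intro x hx
    have : exp (-x) < 1 := exp_lt_one_iff.mpr (by linarith)
    linarith
  have hderiv : ∀ x : ℝ, 0 < x → HasDerivAt (fun x : ℝ => x / (1 - exp (-x)) - x / 2)
      ((1 * (1 - exp (-x)) - x * exp (-x)) / (1 - exp (-x))^2 - 1/2) x := by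
    intro x hx
    have h1 : HasDerivAt (fun x : ℝ => 1 - exp (-x)) (exp (-x)) x := by
      have := (Real.hasDerivAt_exp (-x)).comp x (hasDerivAt_neg x)
      exact ((hasDerivAt_const x (1:ℝ)).sub this).congr_deriv (by simp)
    have h2 := (hasDerivAt_id x).div h1 (ne_of_gt (hd x hx))
    have h3 := h2.sub ((hasDerivAt_id x).div_const 2)
    exact h3.congr_deriv (by simp)
  apply strictMonoOn_of_deriv_pos (convex_Ioi 0)
  · intro x hx
    exact (hderiv x hx).continuousAt.continuousWithinAt
  · intro x hx
    rw [interior_Ioi] at hx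
    have hx0 : (0:ℝ) < x := hx
    rw [(hderiv x hx0).deriv]
    have hdn := hd x hx0
    have hu : 0 < exp (-x) := exp_pos _
    have hsinh : x < Real.sinh x := Real.self_lt_sinh_iff.mpr hx0
    rw [Real.sinh_eq] at hsinh
    have hee : exp x * exp (-x) = 1 := by
      rw [← Real.exp_add]; simp
    have key : 2 * x * exp (-x) < 1 - exp (-x) ^ 2 := by nlinarith
    rw [div_sub' (by positivity)]
    apply div_pos _ (by positivity)
    nlinarith

theorem F_strictMonoOn (p q : ℝ)
    (hp : p ∈ Set.Ioo (0 : ℝ) 1) (hq : q ∈ Set.Ioo (0 : ℝ) 1) :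
    StrictMonoOn
      (fun α : ℝ => α * (1 / (1 - p ^ α) + 1 / (1 - q ^ α) - 1))
      (Set.Ioi (0 : ℝ)) := by
  obtain ⟨hp0, hp1⟩ := hp
  obtain ⟨hq0, hq1⟩ := hq
  have ha : 0 < -Real.log p := by have := Real.log_neg hp0 hp1; linarith
  have hb : 0 < -Real.log q := by have := Real.log_neg hq0 hq1; linarith
  set a := -Real.log p with ha'
  set b := -Real.log q with hb'
  have key : ∀ α : ℝ, α * (1 / (1 - p ^ α) + 1 / (1 - q ^ α) - 1)
      = ((a*α) / (1 - exp (-(a*α))) - (a*α)/2) / a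
        + ((b*α) / (1 - exp (-(b*α))) - (b*α)/2) / b := by
    intro α
    have hpα : p ^ α = exp (-(a*α)) := by
      rw [Real.rpow_def_of_pos hp0, ha']; ring_nf
    have hqα : q ^ α = exp (-(b*α)) := by
      rw [Real.rpow_def_of_pos hq0, hb']; ring_nf
    rw [hpα, hqα]
    have e1 : ∀ (c t D : ℝ), c ≠ 0 → (c*t/D - c*t/2)/c = t/D - t/2 := by
      intro c t D hc
      rw [mul_div_assoc, mul_div_assoc, ← mul_sub, mul_div_cancel_left₀ _ hc]
    rw [e1 a α _ (ne_of_gt ha), e1 b α _ (ne_of_gt hb)]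
    ring
  intro x hx y hy hxy
  simp only
  rw [key x, key y]
  have h1 := h_strictMono (Set.mem_Ioi.mpr (mul_pos ha (Set.mem_Ioi.mp hx)))
    (Set.mem_Ioi.mpr (mul_pos ha (Set.mem_Ioi.mp hy))) (by nlinarith [Set.mem_Ioi.mp hx])
  have h2 := h_strictMono (Set.mem_Ioi.mpr (mul_pos hb (Set.mem_Ioi.mp hx)))
    (Set.mem_Ioi.mpr (mul_pos hb (Set.mem_Ioi.mp hy))) (by nlinarith [Set.mem_Ioi.mp hx])
  simp only at h1 h2
  exact add_lt_add ((div_lt_div_iff_of_pos_right ha).mpr h1) ((div_lt_div_iff_of_pos_right hb).mpr h2)
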